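/- arXiv:2505.17157 — 2 statements merged into one kernel-verified Lean document; each statement's English description precedes it below -/
import Mathlib

section
/- Let 0 < k < 1, let H_k(z) = z/((1-k)(1-z)) + (k/(1-k)^2) · Log((1-z)/(1-kz)) on the unit disk 𝔻, and let 0 < r < 1. Then |H_k(r)| = A(k,r) = r/((1-k)(1-r)) + (k/(1-k)^2) · log((1-r)/(1-kr)) and |H_k'(r)| = 1/((1-r)^2 (1-kr)); that is, the extremal function H_k attains equality in both the upper growth bound and the upper distortion bound at z = r. -/
open Complex Metric Set

/-- The extremal function `H_k` attains equality in the upper growth bound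
`A(k,r)` and in the upper distortion bound at the point `z = r`. -/
theorem Hk_attains_upper_bounds
    (k : ℝ) (hk0 : 0 < k) (hk1 : k < 1) (r : ℝ) (hr0 : 0 < r) (hr1 : r < 1) :
    ‖(fun z : ℂ => z / ((1 - (k : ℂ)) * (1 - z)) +
          ((k : ℂ) / (1 - (k : ℂ)) ^ 2) * Complex.log ((1 - z) / (1 - (k : ℂ) * z))) (r : ℂ)‖ =
        r / ((1 - k) * (1 - r)) + k / (1 - k) ^ 2 * Real.log ((1 - r) / (1 - k * r)) ∧
      ‖deriv (fun z : ℂ => z / ((1 - (k : ℂ)) * (1 - z)) +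
            ((k : ℂ) / (1 - (k : ℂ)) ^ 2) * Complex.log ((1 - z) / (1 - (k : ℂ) * z))) (r : ℂ)‖ =
        1 / ((1 - r) ^ 2 * (1 - k * r)) := by
  have hk : (0:ℝ) < 1 - k := by linarith
  have hr : (0:ℝ) < 1 - r := by linarith
  have hkr : (0:ℝ) < 1 - k * r := by nlinarith
  have hkC : (1:ℂ) - (k:ℂ) ≠ 0 := by
    exact_mod_cast Complex.ofReal_ne_zero.2 hk.ne'
  have hrC : (1:ℂ) - (r:ℂ) ≠ 0 := by
    exact_mod_cast Complex.ofReal_ne_zero.2 hr.ne'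
  have hkrC : (1:ℂ) - (k:ℂ) * (r:ℂ) ≠ 0 := by
    exact_mod_cast Complex.ofReal_ne_zero.2 hkr.ne'
  have hw : (1 - (r:ℂ)) / (1 - (k:ℂ) * r) = (((1 - r) / (1 - k * r) : ℝ) : ℂ) := by
    push_cast; ring
  -- nonnegativity of A(k,r)
  have hq : (0:ℝ) < (1 - k * r) / (1 - r) := by positivity
  have h1 := Real.log_le_sub_one_of_pos hq
  have h2 : Real.log ((1 - r) / (1 - k * r)) = - Real.log ((1 - k * r) / (1 - r)) := by
    rw [← Real.log_inv, inv_div]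
  have h4 : (1 - k * r) / (1 - r) - 1 = (r - k * r) / (1 - r) := by field_simp; ring
  have h5 : (k * r - r) / (1 - r) = -((r - k * r) / (1 - r)) := by ring
  have hlog_ge : (k * r - r) / (1 - r) ≤ Real.log ((1 - r) / (1 - k * r)) := by
    rw [h2]; linarith
  have key : r / ((1 - k) * (1 - r)) + k / (1 - k) ^ 2 * ((k * r - r) / (1 - r)) = r / (1 - r) := by
    field_simp; ring
  have h3 : 0 ≤ k / (1 - k) ^ 2 * Real.log ((1 - r) / (1 - k * r))
      - k / (1 - k) ^ 2 * ((k * r - r) / (1 - r)) := by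
    rw [← mul_sub]
    exact mul_nonneg (by positivity) (by linarith)
  have hrr : (0:ℝ) ≤ r / (1 - r) := by positivity
  have hA : 0 ≤ r / ((1 - k) * (1 - r)) + k / (1 - k) ^ 2 * Real.log ((1 - r) / (1 - k * r)) := by
    linarith
  constructor
  · have hlog : Complex.log ((1 - (r:ℂ)) / (1 - (k:ℂ) * r))
        = ((Real.log ((1 - r) / (1 - k * r)) : ℝ) : ℂ) := by
      rw [hw, Complex.ofReal_log (by positivity)]
    have hval : (r:ℂ) / ((1 - (k:ℂ)) * (1 - (r:ℂ))) +
        ((k:ℂ) / (1 - (k:ℂ)) ^ 2) * Complex.log ((1 - (r:ℂ)) / (1 - (k:ℂ) * (r:ℂ)))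
        = ((r / ((1 - k) * (1 - r)) + k / (1 - k) ^ 2 * Real.log ((1 - r) / (1 - k * r)) : ℝ) : ℂ) := by
      rw [hlog]; push_cast; ring
    simp only []
    rw [hval, Complex.norm_real, Real.norm_eq_abs]
    exact _root_.abs_of_nonneg hA
  · -- derivative
    have hden1 : (1 - (k:ℂ)) * (1 - (r:ℂ)) ≠ 0 := mul_ne_zero hkC hrC
    have hd1 : HasDerivAt (fun z : ℂ => z / ((1 - (k:ℂ)) * (1 - z)))
        ((1 * ((1 - (k:ℂ)) * (1 - (r:ℂ))) - (r:ℂ) * ((1 - (k:ℂ)) * (-1))) /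
          ((1 - (k:ℂ)) * (1 - (r:ℂ))) ^ 2) (r:ℂ) :=
      (hasDerivAt_id _).div (((hasDerivAt_id _).const_sub 1).const_mul (1 - (k:ℂ))) hden1
    have hg : HasDerivAt (fun z : ℂ => (1 - z) / (1 - (k:ℂ) * z))
        (((-1) * (1 - (k:ℂ) * (r:ℂ)) - (1 - (r:ℂ)) * (-((k:ℂ) * 1))) / (1 - (k:ℂ) * (r:ℂ)) ^ 2)
        (r:ℂ) :=
      ((hasDerivAt_id _).const_sub 1).div (((hasDerivAt_id _).const_mul (k:ℂ)).const_sub 1) hkrC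
    have hmem : (1 - (r:ℂ)) / (1 - (k:ℂ) * (r:ℂ)) ∈ Complex.slitPlane := by
      rw [hw]
      exact Complex.ofReal_mem_slitPlane.2 (by positivity)
    have hd2 := (hg.clog hmem).const_mul ((k:ℂ) / (1 - (k:ℂ)) ^ 2)
    have hd : HasDerivAt (fun z : ℂ => z / ((1 - (k : ℂ)) * (1 - z)) +
        ((k : ℂ) / (1 - (k : ℂ)) ^ 2) * Complex.log ((1 - z) / (1 - (k : ℂ) * z))) _ (r:ℂ) :=
      hd1.add hd2
    rw [hd.deriv]
    have hcalc : (1 * ((1 - (k:ℂ)) * (1 - (r:ℂ))) - (r:ℂ) * ((1 - (k:ℂ)) * (-1))) /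
          ((1 - (k:ℂ)) * (1 - (r:ℂ))) ^ 2 +
        (k:ℂ) / (1 - (k:ℂ)) ^ 2 *
          ((((-1) * (1 - (k:ℂ) * (r:ℂ)) - (1 - (r:ℂ)) * (-((k:ℂ) * 1))) / (1 - (k:ℂ) * (r:ℂ)) ^ 2) /
            ((1 - (r:ℂ)) / (1 - (k:ℂ) * (r:ℂ))))
        = ((1 / ((1 - r) ^ 2 * (1 - k * r)) : ℝ) : ℂ) := by
      have e1 : (((-1) * (1 - (k:ℂ) * (r:ℂ)) - (1 - (r:ℂ)) * (-((k:ℂ) * 1))) / (1 - (k:ℂ) * (r:ℂ)) ^ 2) /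
          ((1 - (r:ℂ)) / (1 - (k:ℂ) * (r:ℂ))) = ((k:ℂ) - 1) / ((1 - (r:ℂ)) * (1 - (k:ℂ) * (r:ℂ))) := by
        rw [div_div_eq_mul_div, div_mul_eq_mul_div, div_div]
        rw [div_eq_div_iff (by exact mul_ne_zero (pow_ne_zero 2 hkrC) hrC)
          (mul_ne_zero hrC hkrC)]
        ring
      rw [e1]
      have e2 : (1 * ((1 - (k:ℂ)) * (1 - (r:ℂ))) - (r:ℂ) * ((1 - (k:ℂ)) * (-1))) /
          ((1 - (k:ℂ)) * (1 - (r:ℂ))) ^ 2 = 1 / ((1 - (k:ℂ)) * (1 - (r:ℂ)) ^ 2) := by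
        rw [div_eq_div_iff (by exact pow_ne_zero 2 (mul_ne_zero hkC hrC))
          (mul_ne_zero hkC (pow_ne_zero 2 hrC))]
        ring
      rw [e2]
      push_cast
      field_simp
      ring
    rw [hcalc, Complex.norm_real, Real.norm_eq_abs]
    exact _root_.abs_of_nonneg (by positivity)
end

section
/- Let 0 < k < 1, let H_k(z) = z/((1-k)(1-z)) + (k/(1-k)^2) · Log((1-z)/(1-kz)) on the unit disk 𝔻, and let 0 < r < 1. Then |H_k(-r)| = B(k,r) = r/((1-k)(1+r)) + (k/(1-k)^2) · log((1+kr)/(1+r)) and |H_k'(-r)| = 1/((1+r)^2 (1+kr)); that is, the rotated extremal function attains equality in both the lower growth bound and the lower distortion bound. -/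
open Complex Metric Set

/-- The rotated extremal function attains equality in the lower growth bound
`B(k,r)` and in the lower distortion bound at the point `z = -r`. -/
theorem Hk_attains_lower_bounds
    (k : ℝ) (hk0 : 0 < k) (hk1 : k < 1) (r : ℝ) (hr0 : 0 < r) (hr1 : r < 1) :
    ‖((fun z : ℂ => z / ((1 - (k : ℂ)) * (1 - z)) +
          ((k : ℂ) / (1 - (k : ℂ)) ^ 2) * Complex.log ((1 - z) / (1 - (k : ℂ) * z))) (-(r : ℂ)))‖ =
        r / ((1 - k) * (1 + r)) + k / (1 - k) ^ 2 * Real.log ((1 + k * r) / (1 + r)) ∧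
      ‖(deriv (fun z : ℂ => z / ((1 - (k : ℂ)) * (1 - z)) +
            ((k : ℂ) / (1 - (k : ℂ)) ^ 2) * Complex.log ((1 - z) / (1 - (k : ℂ) * z))) (-(r : ℂ)))‖ =
        1 / ((1 + r) ^ 2 * (1 + k * r)) := by
  have h1k : (0:ℝ) < 1 - k := by linarith
  have hp1 : (0:ℝ) < 1 + r := by linarith
  have hp2 : (0:ℝ) < 1 + k * r := by nlinarith
  have hc1 : (1:ℂ) - (k:ℂ) ≠ 0 := by
    rw [show (1:ℂ) - (k:ℂ) = ((1 - k : ℝ) : ℂ) by push_cast; ring]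
    exact_mod_cast h1k.ne'
  have hc2 : (1:ℂ) - (-(r:ℂ)) ≠ 0 := by
    rw [show (1:ℂ) - (-(r:ℂ)) = ((1 + r : ℝ) : ℂ) by push_cast; ring]
    exact_mod_cast hp1.ne'
  have hc3 : (1:ℂ) - (k:ℂ) * (-(r:ℂ)) ≠ 0 := by
    rw [show (1:ℂ) - (k:ℂ) * (-(r:ℂ)) = ((1 + k * r : ℝ) : ℂ) by push_cast; ring]
    exact_mod_cast hp2.ne'
  constructor
  · -- value part
    have harg : ((1:ℂ) - (-(r:ℂ))) / (1 - (k:ℂ) * (-(r:ℂ))) = (((1 + r) / (1 + k * r) : ℝ) : ℂ) := by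
      push_cast; ring
    have hlog : Complex.log (((1:ℂ) - (-(r:ℂ))) / (1 - (k:ℂ) * (-(r:ℂ))))
        = ((Real.log ((1 + r) / (1 + k * r)) : ℝ) : ℂ) := by
      rw [harg, Complex.ofReal_log (by positivity)]
    have hval : ((fun z : ℂ => z / ((1 - (k : ℂ)) * (1 - z)) +
          ((k : ℂ) / (1 - (k : ℂ)) ^ 2) * Complex.log ((1 - z) / (1 - (k : ℂ) * z))) (-(r : ℂ)))
        = (((-r) / ((1 - k) * (1 + r)) + k / (1 - k) ^ 2 * Real.log ((1 + r) / (1 + k * r)) : ℝ) : ℂ) := by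
      simp only [hlog]
      push_cast
      ring
    rw [hval, Complex.norm_real, Real.norm_eq_abs]
    have hlogeq : Real.log ((1 + r) / (1 + k * r)) = - Real.log ((1 + k * r) / (1 + r)) := by
      rw [← Real.log_inv]
      congr 1
      field_simp
    have hL : Real.log ((1 + r) / (1 + k * r)) ≤ r * (1 - k) / (1 + k * r) := by
      have := Real.log_le_sub_one_of_pos (show (0:ℝ) < (1 + r)/(1 + k*r) by positivity)
      have he : (1 + r)/(1 + k*r) - 1 = r * (1 - k) / (1 + k * r) := by
        field_simp; ring
      linarith [he ▸ this]
    have hB : 0 ≤ r / ((1 - k) * (1 + r)) + k / (1 - k) ^ 2 * Real.log ((1 + k * r) / (1 + r)) := by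
      rw [show Real.log ((1 + k * r) / (1 + r)) = - Real.log ((1 + r) / (1 + k * r)) by
            rw [← Real.log_inv]; congr 1; field_simp]
      have h2 : k / (1 - k) ^ 2 * Real.log ((1 + r) / (1 + k * r))
          ≤ k / (1 - k) ^ 2 * (r * (1 - k) / (1 + k * r)) := by
        apply mul_le_mul_of_nonneg_left hL (by positivity)
      have h3 : k / (1 - k) ^ 2 * (r * (1 - k) / (1 + k * r)) ≤ r / ((1 - k) * (1 + r)) := by
        rw [show k / (1 - k) ^ 2 * (r * (1 - k) / (1 + k * r)) = (k * r) / ((1 - k) * (1 + k * r)) by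
              field_simp,
          div_le_div_iff₀ (by positivity) (by positivity)]
        nlinarith [mul_pos (mul_pos hk0 hr0) (mul_pos h1k hr0)]
      linarith
    rw [hlogeq,
      show -r / ((1 - k) * (1 + r)) + k / (1 - k) ^ 2 * -Real.log ((1 + k * r) / (1 + r)) =
          -(r / ((1 - k) * (1 + r)) + k / (1 - k) ^ 2 * Real.log ((1 + k * r) / (1 + r))) from by
        ring,
      abs_neg, _root_.abs_of_nonneg hB]
  · -- derivative part
    set z : ℂ := -(r:ℂ) with hz
    have hd1 : HasDerivAt (fun z : ℂ => z / ((1 - (k:ℂ)) * (1 - z)))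
        ((1 * ((1 - (k:ℂ)) * (1 - z)) - z * -(1 - (k:ℂ))) / ((1 - (k:ℂ)) * (1 - z)) ^ 2) z := by
      have hden : HasDerivAt (fun z : ℂ => (1 - (k:ℂ)) * (1 - z)) (-(1 - (k:ℂ))) z := by
        simpa using (((hasDerivAt_id z).const_sub (1:ℂ)).const_mul (1 - (k:ℂ)))
      exact (hasDerivAt_id z).div hden (mul_ne_zero hc1 hc2)
    have hg : HasDerivAt (fun z : ℂ => (1 - z) / (1 - (k:ℂ) * z))
        ((-1 * (1 - (k:ℂ) * z) - (1 - z) * -(k:ℂ)) / (1 - (k:ℂ) * z) ^ 2) z := by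
      have hnum : HasDerivAt (fun z : ℂ => (1:ℂ) - z) (-1) z := (hasDerivAt_id z).const_sub 1
      have hden : HasDerivAt (fun z : ℂ => (1:ℂ) - (k:ℂ) * z) (-(k:ℂ)) z := by
        simpa using (((hasDerivAt_id z).const_mul (k:ℂ)).const_sub (1:ℂ))
      exact hnum.div hden hc3
    have hslit : ((1:ℂ) - z) / (1 - (k:ℂ) * z) ∈ Complex.slitPlane := by
      rw [Complex.mem_slitPlane_iff]
      left
      have : ((1:ℂ) - z) / (1 - (k:ℂ) * z) = (((1 + r) / (1 + k * r) : ℝ) : ℂ) := by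
        rw [hz]; push_cast; ring
      rw [this, Complex.ofReal_re]
      positivity
    have hd2 := (hg.clog hslit).const_mul ((k:ℂ) / (1 - (k:ℂ)) ^ 2)
    have htot := hd1.add hd2
    rw [(by exact htot : HasDerivAt (fun z : ℂ => z / ((1 - (k:ℂ)) * (1 - z)) + ((k:ℂ) / (1 - (k:ℂ)) ^ 2) * Complex.log ((1 - z) / (1 - (k:ℂ) * z))) (_ + _) z).deriv]
    have hD : (1 * ((1 - (k:ℂ)) * (1 - z)) - z * -(1 - (k:ℂ))) / ((1 - (k:ℂ)) * (1 - z)) ^ 2 +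
        (k:ℂ) / (1 - (k:ℂ)) ^ 2 *
          ((-1 * (1 - (k:ℂ) * z) - (1 - z) * -(k:ℂ)) / (1 - (k:ℂ) * z) ^ 2 / ((1 - z) / (1 - (k:ℂ) * z)))
        = ((1 / ((1 + r) ^ 2 * (1 + k * r)) : ℝ) : ℂ) := by
      have e1 : (1:ℂ) - (k:ℂ) = ((1 - k : ℝ) : ℂ) := by push_cast; ring
      have e2 : (1:ℂ) - z = ((1 + r : ℝ) : ℂ) := by rw [hz]; push_cast; ring
      have e3 : (1:ℂ) - (k:ℂ) * z = ((1 + k * r : ℝ) : ℂ) := by rw [hz]; push_cast; ring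
      have e4 : z = ((-r : ℝ) : ℂ) := by rw [hz]; push_cast; ring
      rw [e1, e2, e3, e4]
      have hR : (1 * ((1 - k) * (1 + r)) - (-r) * -(1 - k)) / ((1 - k) * (1 + r)) ^ 2 +
          k / (1 - k) ^ 2 *
            ((-1 * (1 + k * r) - (1 + r) * -k) / (1 + k * r) ^ 2 / ((1 + r) / (1 + k * r)))
          = 1 / ((1 + r) ^ 2 * (1 + k * r)) := by
        have n1 := h1k.ne'
        have n2 := hp1.ne'
        have n3 := hp2.ne'
        field_simp
        ring
      exact_mod_cast hR
    rw [hD, Complex.norm_real, Real.norm_eq_abs, abs_of_pos (by positivity)]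
end
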